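/- Let G act continuously on a Hausdorff space X and suppose a Borel probability measure μ on G is supported on a compact set K ⊆ G. Let j_x : G → X be g ↦ g⁻¹·x. Then the pushforward measure (j_x)_* μ on X is supported inside the orbit Gx (not just its closure): every point of cl(Gx) \ Gx has an open neighborhood of (j_x)_*μ-measure zero. -/

import Mathlib

open MeasureTheory

/-- If `μ` is a Borel probability measure on a topological group `G` acting
continuously on a Hausdorff space `X`, supported on a compact `K ⊆ G`, then the
pushforward under `j_x : g ↦ g⁻¹ • x` is supported inside the orbit `Gx`: every point
of `cl(Gx) \ Gx` has an open neighborhood of pushforward measure zero. -/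
theorem pushforward_compactly_supported_in_orbit
    {G X : Type*} [Group G] [TopologicalSpace G] [IsTopologicalGroup G]
    [MeasurableSpace G] [BorelSpace G]
    [TopologicalSpace X] [T2Space X] [MeasurableSpace X] [BorelSpace X]
    [MulAction G X] [ContinuousSMul G X]
    (μ : Measure G) [IsProbabilityMeasure μ]
    (K : Set G) (hK : IsCompact K) (hsupp : μ Kᶜ = 0)
    (x : X) :
    ∀ y ∈ closure (MulAction.orbit G x) \ MulAction.orbit G x,
      ∃ U : Set X, IsOpen U ∧ y ∈ U ∧
        Measure.map (fun g : G => g⁻¹ • x) μ U = 0 := by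
  intro y hy
  have hcont : Continuous (fun g : G => g⁻¹ • x) :=
    (continuous_inv).smul continuous_const
  have hCcomp : IsCompact ((fun g : G => g⁻¹ • x) '' K) := hK.image hcont
  have hCclosed : IsClosed ((fun g : G => g⁻¹ • x) '' K) := hCcomp.isClosed
  refine ⟨((fun g : G => g⁻¹ • x) '' K)ᶜ, hCclosed.isOpen_compl, ?_, ?_⟩
  · intro hyC
    obtain ⟨g, -, hg⟩ := hyC
    exact hy.2 ⟨g⁻¹, hg⟩
  · rw [Measure.map_apply hcont.measurable hCclosed.measurableSet.compl]
    refine measure_mono_null ?_ hsupp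
    intro g hg hgK
    exact hg (Set.mem_image_of_mem _ hgK)
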